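/- Let a_1,...,a_n ∈ ℝ^d and suppose the n(n−1) vectors {a_i^{⊗2} ⊗ a_j^{⊗2} − (a_i ⊗ a_j)^{⊗2} : i ≠ j} in (ℝ^d)^{⊗4} are linearly independent. Then every vector of the form x^{⊗2} (x ∈ ℝ^d) lying in the linear span of a_1^{⊗2},...,a_n^{⊗2} is a scalar multiple of a_i^{⊗2} for some i. -/
import Mathlib

open scoped BigOperators

theorem stmt_16 (d n : ℕ) (hn : 0 < n) (a : Fin n → Fin d → ℝ)
    (hind : LinearIndependent ℝ
      (fun p : {p : Fin n × Fin n // p.1 ≠ p.2} =>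
        (fun q : Fin d × Fin d × Fin d × Fin d =>
          a p.1.1 q.1 * a p.1.1 q.2.1 * a p.1.2 q.2.2.1 * a p.1.2 q.2.2.2
            - a p.1.1 q.1 * a p.1.2 q.2.1 * a p.1.1 q.2.2.1 * a p.1.2 q.2.2.2)))
    (x : Fin d → ℝ)
    (hx : (fun q : Fin d × Fin d => x q.1 * x q.2) ∈
      Submodule.span ℝ (Set.range fun i => (fun q : Fin d × Fin d => a i q.1 * a i q.2))) :
    ∃ (i : Fin n) (c : ℝ),
      (fun q : Fin d × Fin d => x q.1 * x q.2)
        = c • (fun q : Fin d × Fin d => a i q.1 * a i q.2) := by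
  rw [Submodule.mem_span_range_iff_exists_fun] at hx
  obtain ⟨α, hα⟩ := hx
  have key : ∀ q q' : Fin d, (∑ i, α i * (a i q * a i q')) = x q * x q' := by
    intro q q'
    have h := congrFun hα (q, q')
    simpa [Finset.sum_apply] using h
  rw [Fintype.linearIndependent_iff] at hind
  have hzero : ∀ i j : Fin n, i ≠ j → α i * α j = 0 := by
    intro i j hij
    have h0 : (∑ p : {p : Fin n × Fin n // p.1 ≠ p.2}, (α p.1.1 * α p.1.2) •
        (fun q : Fin d × Fin d × Fin d × Fin d =>
          a p.1.1 q.1 * a p.1.1 q.2.1 * a p.1.2 q.2.2.1 * a p.1.2 q.2.2.2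
            - a p.1.1 q.1 * a p.1.2 q.2.1 * a p.1.1 q.2.2.1 * a p.1.2 q.2.2.2)) = 0 := by
      funext q
      obtain ⟨q1, q2, q3, q4⟩ := q
      simp only [Finset.sum_apply, Pi.smul_apply, smul_eq_mul, Pi.zero_apply]
      have hsub : (∑ p : {p : Fin n × Fin n // p.1 ≠ p.2},
          α p.1.1 * α p.1.2 *
            (a p.1.1 q1 * a p.1.1 q2 * a p.1.2 q3 * a p.1.2 q4
              - a p.1.1 q1 * a p.1.2 q2 * a p.1.1 q3 * a p.1.2 q4))
          = ∑ p ∈ Finset.univ.filter (fun p : Fin n × Fin n => p.1 ≠ p.2),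
            α p.1 * α p.2 *
            (a p.1 q1 * a p.1 q2 * a p.2 q3 * a p.2 q4
              - a p.1 q1 * a p.2 q2 * a p.1 q3 * a p.2 q4) :=
        (Finset.sum_subtype (Finset.univ.filter (fun p : Fin n × Fin n => p.1 ≠ p.2))
          (fun p => by simp)
          (fun p : Fin n × Fin n => α p.1 * α p.2 *
            (a p.1 q1 * a p.1 q2 * a p.2 q3 * a p.2 q4
              - a p.1 q1 * a p.2 q2 * a p.1 q3 * a p.2 q4))).symm
      rw [hsub, Finset.sum_filter_of_ne (by
        intro p _ h heq
        apply h
        rw [heq]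
        ring)]
      have expand : ∀ p : Fin n × Fin n,
          α p.1 * α p.2 *
            (a p.1 q1 * a p.1 q2 * a p.2 q3 * a p.2 q4
              - a p.1 q1 * a p.2 q2 * a p.1 q3 * a p.2 q4)
          = (α p.1 * (a p.1 q1 * a p.1 q2)) * (α p.2 * (a p.2 q3 * a p.2 q4))
            - (α p.1 * (a p.1 q1 * a p.1 q3)) * (α p.2 * (a p.2 q2 * a p.2 q4)) := by
        intro p; ring
      rw [Finset.sum_congr rfl (fun p _ => expand p), Finset.sum_sub_distrib,
        Fintype.sum_prod_type, Fintype.sum_prod_type]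
      simp only [← Finset.sum_mul, ← Finset.mul_sum]
      rw [key q1 q2, key q3 q4, key q1 q3, key q2 q4]
      ring
    exact hind _ h0 ⟨(i, j), hij⟩
  by_cases hall : ∀ i, α i = 0
  · refine ⟨⟨0, hn⟩, 0, ?_⟩
    rw [← hα]
    simp [hall]
  · push_neg at hall
    obtain ⟨i, hi⟩ := hall
    refine ⟨i, α i, ?_⟩
    rw [← hα]
    rw [Finset.sum_eq_single i]
    · intro j _ hj
      have := hzero j i hj
      have : α j = 0 := by
        rcases mul_eq_zero.1 this with h | h
        · exact h
        · exact absurd h hi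
      simp [this]
    · intro h; exact absurd (Finset.mem_univ i) h
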